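/- For a finite weighted graph G with Cheeger constant h, the second-smallest eigenvalue λ of the normalized graph Laplacian satisfies λ ≥ h²/2. -/

import Mathlib

open Finset


private lemma coarea {V : Type*} [Fintype V] [DecidableEq V]
    (w : V → V → ℝ) (d : V → ℝ) (h : ℝ)
    (hsymm : ∀ i j, w i j = w j i) (hnn : ∀ i j, 0 ≤ w i j) :
    ∀ n : ℕ, ∀ σ : V → ℝ, (Finset.image σ univ).card ≤ n →
      ∀ m : ℝ, (∀ i, m ≤ σ i) → (∃ i, σ i = m) →
      (∀ t : ℝ, (univ.filter fun i => t < σ i).Nonempty →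
        (univ.filter fun i => t < σ i) ≠ univ →
        h * ∑ i ∈ univ.filter (fun i => t < σ i), d i ≤
          ∑ i ∈ univ.filter (fun i => t < σ i),
            ∑ j ∈ (univ.filter (fun i => t < σ i))ᶜ, w i j) →
      h * (∑ i, σ i * d i - m * ∑ i, d i) ≤
        (1/2) * ∑ i, ∑ j, w i j * |σ i - σ j| := by
  intro n
  induction n with
  | zero =>
    intro σ hcard m hle ⟨i0, hi0⟩ hlev
    exact absurd (Finset.card_eq_zero.mp (Nat.le_zero.mp hcard) ▸
      Finset.mem_image_of_mem σ (mem_univ i0)) (Finset.notMem_empty _)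
  | succ n ih =>
    intro σ hcard m hle hex hlev
    by_cases hconst : ∀ i, σ i = m
    · have h1 : ∑ i, σ i * d i = m * ∑ i, d i := by
        rw [Finset.mul_sum]; exact Finset.sum_congr rfl fun i _ => by rw [hconst i]
      rw [h1, sub_self, mul_zero]
      have : (0:ℝ) ≤ ∑ i, ∑ j, w i j * |σ i - σ j| :=
        Finset.sum_nonneg fun i _ => Finset.sum_nonneg fun j _ =>
          mul_nonneg (hnn i j) (abs_nonneg _)
      linarith
    · push_neg at hconst
      obtain ⟨i1, hi1⟩ := hconst
      obtain ⟨i0, hi0⟩ := hex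
      set A := univ.filter (fun i => m < σ i) with hA
      have hAne : A.Nonempty := ⟨i1, by simp [hA, lt_of_le_of_ne (hle i1) (Ne.symm hi1)]⟩
      have hAuniv : A ≠ univ := by
        intro hcontra
        have : i0 ∈ A := hcontra ▸ mem_univ i0
        simp [hA, hi0] at this
      obtain ⟨i2, hi2A, hi2min⟩ := A.exists_min_image σ hAne
      set m' := σ i2 with hm'
      have hmm' : m < m' := by simpa [hA] using hi2A
      set σ' := fun i => max (σ i) m' with hσ'
      set τ := fun i => min (σ i) m' with hτ
      -- case facts
      have hin : ∀ i, i ∈ A → σ' i = σ i ∧ τ i = m' := by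
        intro i hi
        have : m' ≤ σ i := hi2min i hi
        constructor <;> simp [hσ', hτ, this]
      have hout : ∀ i, i ∉ A → σ i = m ∧ σ' i = m' ∧ τ i = m := by
        intro i hi
        have h2 : ¬ (m < σ i) := by simpa [hA] using hi
        have h3 : σ i = m := le_antisymm (not_lt.mp h2) (hle i)
        refine ⟨h3, ?_, ?_⟩ <;> simp [hσ', hτ, h3, le_of_lt hmm']
      -- card bound
      have hcard' : (Finset.image σ' univ).card ≤ n := by
        have hsub : Finset.image σ' univ ⊆ (Finset.image σ univ).erase m := by
          intro x hx
          obtain ⟨i, -, hi⟩ := Finset.mem_image.mp hx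
          by_cases hiA : i ∈ A
          · obtain ⟨e1, -⟩ := hin i hiA
            have : m < σ i := by simpa [hA] using hiA
            exact Finset.mem_erase.mpr ⟨by rw [← hi, e1]; exact ne_of_gt this,
              hi ▸ e1 ▸ Finset.mem_image_of_mem σ (mem_univ i)⟩
          · obtain ⟨-, e2, -⟩ := hout i hiA
            exact Finset.mem_erase.mpr ⟨by rw [← hi, e2]; exact ne_of_gt hmm',
              by rw [← hi, e2, hm']; exact Finset.mem_image_of_mem σ (mem_univ i2)⟩
        have hmmem : m ∈ Finset.image σ univ := hi0 ▸ Finset.mem_image_of_mem σ (mem_univ i0)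
        calc (Finset.image σ' univ).card ≤ ((Finset.image σ univ).erase m).card :=
              Finset.card_le_card hsub
          _ = (Finset.image σ univ).card - 1 := Finset.card_erase_of_mem hmmem
          _ ≤ n := by omega
      -- hypotheses for IH
      have hle' : ∀ i, m' ≤ σ' i := fun i => le_max_right _ _
      have hex' : ∃ i, σ' i = m' := ⟨i2, by simp [hσ', hm']⟩
      have hlev' : ∀ t : ℝ, (univ.filter fun i => t < σ' i).Nonempty →
          (univ.filter fun i => t < σ' i) ≠ univ →
          h * ∑ i ∈ univ.filter (fun i => t < σ' i), d i ≤
            ∑ i ∈ univ.filter (fun i => t < σ' i),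
              ∑ j ∈ (univ.filter (fun i => t < σ' i))ᶜ, w i j := by
        intro t hne hnuniv
        have ht : m' ≤ t := by
          by_contra hrt
          push_neg at hrt
          exact hnuniv (Finset.eq_univ_iff_forall.mpr fun i => by
            simp [hσ', lt_max_iff]; right; exact hrt)
        have heq : (univ.filter fun i => t < σ' i) = (univ.filter fun i => t < σ i) := by
          ext i
          simp [hσ', lt_max_iff, not_lt.mpr ht]
        rw [heq] at hne hnuniv ⊢
        exact hlev t hne hnuniv
      have IH := ih σ' hcard' m' hle' hex' hlev'
      -- cut bound at level m
      have hcut : h * ∑ i ∈ A, d i ≤ ∑ i ∈ A, ∑ j ∈ Aᶜ, w i j := hlev m hAne hAuniv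
      -- identity I1
      have I1 : ∀ i j, |σ i - σ j| = |σ' i - σ' j| + |τ i - τ j| := by
        intro i j
        have hsum : σ' i + τ i = σ i + m' := max_add_min _ _
        have hsum' : σ' j + τ j = σ j + m' := max_add_min _ _
        rcases le_total (σ i) (σ j) with hij | hij
        · have e1 : σ' i ≤ σ' j := max_le_max_right _ hij
          have e2 : τ i ≤ τ j := min_le_min_right _ hij
          rw [abs_of_nonpos (by linarith), abs_of_nonpos (by linarith),
            abs_of_nonpos (by linarith)]
          linarith
        · have e1 : σ' j ≤ σ' i := max_le_max_right _ hij
          have e2 : τ j ≤ τ i := min_le_min_right _ hij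
          rw [abs_of_nonneg (by linarith), abs_of_nonneg (by linarith),
            abs_of_nonneg (by linarith)]
          linarith
      -- I2 : volume identity
      have I2 : ∑ i, σ i * d i - m * ∑ i, d i =
          (∑ i, σ' i * d i - m' * ∑ i, d i) + (m' - m) * ∑ i ∈ A, d i := by
        have e0 : ∑ i, (τ i - m) * d i = (m' - m) * ∑ i ∈ A, d i := by
          rw [Finset.mul_sum, ← Finset.sum_filter_add_sum_filter_not univ (fun i => m < σ i)]
          rw [← hA]
          have e1 : ∑ i ∈ Finset.filter (fun i => ¬ m < σ i) univ, (τ i - m) * d i = 0 := by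
            apply Finset.sum_eq_zero
            intro i hi
            obtain ⟨-, -, e⟩ := hout i (by simpa [hA] using (Finset.mem_filter.mp hi).2)
            rw [e]; ring
          rw [e1, add_zero]
          apply Finset.sum_congr rfl
          intro i hi
          rw [(hin i hi).2]
        have e2 : ∀ i, σ i * d i - m * d i = (σ' i * d i - m' * d i) + (τ i - m) * d i := by
          intro i
          have hsum : σ' i + τ i = σ i + m' := max_add_min _ _
          linear_combination (-(d i)) * hsum
        calc ∑ i, σ i * d i - m * ∑ i, d i = ∑ i, (σ i * d i - m * d i) := by
              rw [Finset.sum_sub_distrib, Finset.mul_sum]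
          _ = ∑ i, ((σ' i * d i - m' * d i) + (τ i - m) * d i) :=
              Finset.sum_congr rfl fun i _ => e2 i
          _ = (∑ i, σ' i * d i - m' * ∑ i, d i) + ∑ i, (τ i - m) * d i := by
              rw [Finset.sum_add_distrib, Finset.sum_sub_distrib, Finset.mul_sum]
          _ = _ := by rw [e0]
      -- I3 : cut identity for τ
      have I3 : (1/2 : ℝ) * ∑ i, ∑ j, w i j * |τ i - τ j| = (m' - m) * ∑ i ∈ A, ∑ j ∈ Aᶜ, w i j := by
        have hτval : ∀ i j, w i j * |τ i - τ j| =
            (if i ∈ A then (if j ∈ A then 0 else w i j * (m'-m)) else (if j ∈ A then w i j * (m'-m) else 0)) := by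
          intro i j
          by_cases hi : i ∈ A <;> by_cases hj : j ∈ A
          · rw [if_pos hi, if_pos hj, (hin i hi).2, (hin j hj).2, sub_self, abs_zero, mul_zero]
          · rw [if_pos hi, if_neg hj, (hin i hi).2, (hout j hj).2.2,
              abs_of_nonneg (by linarith)]
          · rw [if_neg hi, if_pos hj, (hout i hi).2.2, (hin j hj).2,
              abs_of_nonpos (by linarith), neg_sub]
          · rw [if_neg hi, if_neg hj, (hout i hi).2.2, (hout j hj).2.2, sub_self,
              abs_zero, mul_zero]
        have expand : ∑ i, ∑ j, w i j * |τ i - τ j| =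
            ∑ i ∈ A, ∑ j ∈ Aᶜ, w i j * (m'-m) + ∑ i ∈ Aᶜ, ∑ j ∈ A, w i j * (m'-m) := by
          rw [← Finset.sum_add_sum_compl A (fun i => ∑ j, w i j * |τ i - τ j|)]
          congr 1
          · apply Finset.sum_congr rfl
            intro i hi
            rw [← Finset.sum_add_sum_compl A (fun j => w i j * |τ i - τ j|)]
            have z : ∑ j ∈ A, w i j * |τ i - τ j| = 0 :=
              Finset.sum_eq_zero fun j hj => by rw [hτval]; simp [hi, hj]
            rw [z, zero_add]
            exact Finset.sum_congr rfl fun j hj => by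
              rw [hτval]; simp [hi, (Finset.mem_compl.mp hj)]
          · apply Finset.sum_congr rfl
            intro i hi
            have hi' := Finset.mem_compl.mp hi
            rw [← Finset.sum_add_sum_compl A (fun j => w i j * |τ i - τ j|)]
            have z : ∑ j ∈ Aᶜ, w i j * |τ i - τ j| = 0 :=
              Finset.sum_eq_zero fun j hj => by
                rw [hτval]; simp [hi', (Finset.mem_compl.mp hj)]
            rw [z, add_zero]
            exact Finset.sum_congr rfl fun j hj => by rw [hτval]; simp [hi', hj]
        have swap : ∑ i ∈ Aᶜ, ∑ j ∈ A, w i j * (m'-m) = ∑ i ∈ A, ∑ j ∈ Aᶜ, w i j * (m'-m) := by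
          rw [Finset.sum_comm]
          exact Finset.sum_congr rfl fun i _ => Finset.sum_congr rfl fun j _ => by rw [hsymm]
        rw [expand, swap]
        simp_rw [← Finset.sum_mul]
        ring
      have split : (1/2 : ℝ) * ∑ i, ∑ j, w i j * |σ i - σ j| =
          (1/2) * ∑ i, ∑ j, w i j * |σ' i - σ' j| + (1/2) * ∑ i, ∑ j, w i j * |τ i - τ j| := by
        rw [← mul_add, ← Finset.sum_add_distrib]
        congr 1
        refine Finset.sum_congr rfl fun i _ => ?_
        rw [← Finset.sum_add_distrib]
        refine Finset.sum_congr rfl fun j _ => ?_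
        rw [I1, mul_add]
      have hcut' : (m' - m) * (h * ∑ i ∈ A, d i) ≤ (m' - m) * ∑ i ∈ A, ∑ j ∈ Aᶜ, w i j :=
        mul_le_mul_of_nonneg_left hcut (by linarith)
      calc h * (∑ i, σ i * d i - m * ∑ i, d i)
          = h * (∑ i, σ' i * d i - m' * ∑ i, d i) + (m' - m) * (h * ∑ i ∈ A, d i) := by
            rw [I2]; ring
        _ ≤ (1/2) * ∑ i, ∑ j, w i j * |σ' i - σ' j| + (m' - m) * ∑ i ∈ A, ∑ j ∈ Aᶜ, w i j :=
            add_le_add IH hcut'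
        _ = (1/2) * ∑ i, ∑ j, w i j * |σ i - σ j| := by rw [split, I3]

private lemma rayleigh_nonneg {V : Type*} [Fintype V] [DecidableEq V] [Nonempty V]
    (w : V → V → ℝ) (d : V → ℝ) (h : ℝ)
    (hsymm : ∀ i j, w i j = w j i) (hnn : ∀ i j, 0 ≤ w i j)
    (hdeg : ∀ i, d i = ∑ j, w i j) (hdpos : ∀ i, 0 < d i) (hge : 0 ≤ h)
    (hh1 : ∀ S : Finset V, S.Nonempty → S ≠ univ →
      h * min (∑ i ∈ S, d i) (∑ j ∈ Sᶜ, d j) ≤ ∑ i ∈ S, ∑ j ∈ Sᶜ, w i j)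
    (ψ : V → ℝ) (hψ : ∀ i, 0 ≤ ψ i)
    (hsupp : ∑ i ∈ univ.filter (fun i => ψ i ≠ 0), d i ≤ (∑ i, d i) / 2) :
    h^2/2 * (∑ i, (ψ i)^2 * d i) ≤ (1/2) * ∑ i, ∑ j, w i j * (ψ i - ψ j)^2 := by
  set Vol := ∑ i, d i with hVol
  have hVolpos : 0 < Vol := Finset.sum_pos (fun i _ => hdpos i) univ_nonempty
  set σ := fun i => (ψ i)^2 with hσ
  set D := ∑ i, (ψ i)^2 * d i with hD
  have hDnn : 0 ≤ D := Finset.sum_nonneg fun i _ => mul_nonneg (sq_nonneg _) (hdpos i).le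
  -- step 1 : coarea bound
  have hlev : ∀ t : ℝ, (univ.filter fun i => t < σ i).Nonempty →
      (univ.filter fun i => t < σ i) ≠ univ →
      h * ∑ i ∈ univ.filter (fun i => t < σ i), d i ≤
        ∑ i ∈ univ.filter (fun i => t < σ i),
          ∑ j ∈ (univ.filter (fun i => t < σ i))ᶜ, w i j := by
    intro t hne hnuniv
    set S := univ.filter (fun i => t < σ i) with hS
    rcases lt_or_ge t 0 with ht | ht
    · exact absurd (Finset.eq_univ_iff_forall.mpr fun i => by
        simp [hS]; exact lt_of_lt_of_le ht (sq_nonneg _)) hnuniv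
    · have hsub : S ⊆ univ.filter (fun i => ψ i ≠ 0) := by
        intro i hi
        have : t < σ i := by simpa [hS] using hi
        simp only [Finset.mem_filter, mem_univ, true_and]
        intro hz
        rw [hσ] at this
        simp only [hz] at this
        nlinarith
      have hSle : ∑ i ∈ S, d i ≤ Vol / 2 :=
        le_trans (Finset.sum_le_sum_of_subset_of_nonneg hsub fun i _ _ => (hdpos i).le) hsupp
      have hcompl : ∑ j ∈ Sᶜ, d j = Vol - ∑ i ∈ S, d i := by
        rw [eq_sub_iff_add_eq, add_comm]
        exact Finset.sum_add_sum_compl S d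
      have hminS : min (∑ i ∈ S, d i) (∑ j ∈ Sᶜ, d j) = ∑ i ∈ S, d i := by
        rw [min_eq_left]; rw [hcompl]; linarith
      have := hh1 S hne hnuniv
      rw [hminS] at this
      exact this
  have key := coarea w d h hsymm hnn (Finset.image σ univ).card σ le_rfl 0
    (fun i => sq_nonneg _) ?_ hlev
  swap
  · -- exists zero
    by_contra hz
    push_neg at hz
    have : univ.filter (fun i => ψ i ≠ 0) = univ := Finset.eq_univ_iff_forall.mpr fun i => by
      simp only [Finset.mem_filter, mem_univ, true_and]
      intro hc
      exact hz i (by rw [hσ]; simp [hc])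
    rw [this] at hsupp
    linarith
  have key2 : h * D ≤ (1/2) * ∑ i, ∑ j, w i j * |σ i - σ j| := by simpa using key
  -- step 2 : Cauchy-Schwarz
  set E2 := ∑ i, ∑ j, w i j * (ψ i - ψ j)^2 with hE2
  have hE2nn : 0 ≤ E2 := Finset.sum_nonneg fun i _ => Finset.sum_nonneg fun j _ =>
    mul_nonneg (hnn i j) (sq_nonneg _)
  have CS : (∑ i, ∑ j, w i j * |σ i - σ j|)^2 ≤ E2 * ∑ i, ∑ j, w i j * (ψ i + ψ j)^2 := by
    have e1 : ∑ i, ∑ j, w i j * |σ i - σ j| =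
        ∑ p : V × V, (Real.sqrt (w p.1 p.2) * |ψ p.1 - ψ p.2|) *
          (Real.sqrt (w p.1 p.2) * (ψ p.1 + ψ p.2)) := by
      rw [← Finset.sum_product']
      refine Finset.sum_congr rfl fun p _ => ?_
      have : Real.sqrt (w p.1 p.2) * |ψ p.1 - ψ p.2| * (Real.sqrt (w p.1 p.2) * (ψ p.1 + ψ p.2))
          = w p.1 p.2 * (|ψ p.1 - ψ p.2| * (ψ p.1 + ψ p.2)) := by
        rw [show Real.sqrt (w p.1 p.2) * |ψ p.1 - ψ p.2| * (Real.sqrt (w p.1 p.2) * (ψ p.1 + ψ p.2))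
          = (Real.sqrt (w p.1 p.2) * Real.sqrt (w p.1 p.2)) * (|ψ p.1 - ψ p.2| * (ψ p.1 + ψ p.2)) by ring,
          Real.mul_self_sqrt (hnn _ _)]
      rw [this]
      congr 1
      rw [← abs_of_nonneg (add_nonneg (hψ _) (hψ _)), ← abs_mul, hσ]
      congr 1
      ring
    have e2 : E2 = ∑ p : V × V, (Real.sqrt (w p.1 p.2) * |ψ p.1 - ψ p.2|)^2 := by
      rw [hE2, ← Finset.sum_product']
      refine Finset.sum_congr rfl fun p _ => ?_
      rw [mul_pow, Real.sq_sqrt (hnn _ _), sq_abs]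
    have e3 : ∑ i, ∑ j, w i j * (ψ i + ψ j)^2 =
        ∑ p : V × V, (Real.sqrt (w p.1 p.2) * (ψ p.1 + ψ p.2))^2 := by
      rw [← Finset.sum_product']
      refine Finset.sum_congr rfl fun p _ => ?_
      rw [mul_pow, Real.sq_sqrt (hnn _ _)]
    rw [e1, e2, e3]
    exact Finset.sum_mul_sq_le_sq_mul_sq _ _ _
  -- step 3 : bound on the plus form
  have plusbound : ∑ i, ∑ j, w i j * (ψ i + ψ j)^2 ≤ 4 * D := by
    have pb1 : ∀ i j, w i j * (ψ i + ψ j)^2 ≤ w i j * (2*(ψ i)^2 + 2*(ψ j)^2) := by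
      intro i j
      apply mul_le_mul_of_nonneg_left _ (hnn i j)
      nlinarith [sq_nonneg (ψ i - ψ j)]
    have pb2 : ∑ i, ∑ j, w i j * (2*(ψ i)^2 + 2*(ψ j)^2) = 4 * D := by
      have : ∀ i j, w i j * (2*(ψ i)^2 + 2*(ψ j)^2) =
          2 * (w i j * (ψ i)^2) + 2 * (w i j * (ψ j)^2) := fun i j => by ring
      simp_rw [this, Finset.sum_add_distrib, ← Finset.mul_sum]
      have t1 : ∑ i, ∑ j : V, w i j * (ψ i)^2 = D := by
        rw [hD]
        refine Finset.sum_congr rfl fun i _ => ?_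
        rw [← Finset.sum_mul, ← hdeg i]
        ring
      have t2 : ∑ i, ∑ j : V, w i j * (ψ j)^2 = D := by
        rw [Finset.sum_comm]
        rw [hD]
        refine Finset.sum_congr rfl fun j _ => ?_
        simp_rw [fun i => hsymm i j]
        rw [← Finset.sum_mul, ← hdeg j]
        ring
      rw [t1, t2]
      ring
    calc ∑ i, ∑ j, w i j * (ψ i + ψ j)^2 ≤ ∑ i, ∑ j, w i j * (2*(ψ i)^2 + 2*(ψ j)^2) :=
          Finset.sum_le_sum fun i _ => Finset.sum_le_sum fun j _ => pb1 i j
      _ = 4 * D := pb2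
  -- combine
  rcases eq_or_lt_of_le hDnn with hD0 | hD0
  · rw [← hD0, mul_zero]
    positivity
  · have hA : 0 ≤ ∑ i, ∑ j, w i j * |σ i - σ j| :=
      Finset.sum_nonneg fun i _ => Finset.sum_nonneg fun j _ =>
        mul_nonneg (hnn i j) (abs_nonneg _)
    have sq1 : (2 * (h * D))^2 ≤ (∑ i, ∑ j, w i j * |σ i - σ j|)^2 := by
      apply sq_le_sq' _ _
      · nlinarith [mul_nonneg hge hDnn]
      · linarith [key2]
    have : 4 * (h*D)^2 ≤ E2 * (4*D) := by
      calc 4 * (h*D)^2 = (2*(h*D))^2 := by ring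
        _ ≤ (∑ i, ∑ j, w i j * |σ i - σ j|)^2 := sq1
        _ ≤ E2 * ∑ i, ∑ j, w i j * (ψ i + ψ j)^2 := CS
        _ ≤ E2 * (4*D) := mul_le_mul_of_nonneg_left plusbound hE2nn
    have : h^2 * D ≤ E2 := by
      have := this
      nlinarith [hD0]
    linarith

/-- **Weighted Cheeger inequality, lower bound** (Theorem A.2):
for a finite connected weighted graph, the second-smallest eigenvalue `lam` of the
normalized Laplacian (characterized as the infimum of the Rayleigh quotient over
functions orthogonal to the zero mode) satisfies `lam ≥ h²/2` where `h` is the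
Cheeger constant. -/
theorem cheeger_lower_bound
    {V : Type*} [Fintype V] [DecidableEq V] [Nonempty V]
    (w : V → V → ℝ) (d : V → ℝ)
    (hsymm : ∀ i j, w i j = w j i)
    (hnn : ∀ i j, 0 ≤ w i j)
    (hloop : ∀ i, 0 ≤ w i i)
    (hd : ∀ i, d i = w i i + ∑ j ∈ univ.erase i, w i j)
    (hdpos : ∀ i, 0 < d i)
    (hconn : ∀ S : Finset V, S.Nonempty → S ≠ univ →
      0 < ∑ i ∈ S, ∑ j ∈ Sᶜ, w i j)
    (h lam : ℝ)
    (hh : IsLeast {r : ℝ | ∃ S : Finset V, S.Nonempty ∧ S ≠ univ ∧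
      r = (∑ i ∈ S, ∑ j ∈ Sᶜ, w i j) /
        min (∑ i ∈ S, d i) (∑ j ∈ Sᶜ, d j)} h)
    (hlam : IsGLB {r : ℝ | ∃ f : V → ℝ, (∑ i, f i * d i) = 0 ∧ f ≠ 0 ∧
      r = ((1/2) * ∑ i, ∑ j, w i j * (f i - f j)^2) / (∑ i, (f i)^2 * d i)} lam) :
    h^2 / 2 ≤ lam := by
  classical
  have hdeg : ∀ i, d i = ∑ j, w i j := fun i => by
    rw [hd i, Finset.add_sum_erase _ _ (mem_univ i)]
  set Vol := ∑ i, d i with hVol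
  have hVolpos : 0 < Vol := Finset.sum_pos (fun i _ => hdpos i) univ_nonempty
  have volpos : ∀ S : Finset V, S.Nonempty → 0 < ∑ i ∈ S, d i :=
    fun S hS => Finset.sum_pos (fun i _ => hdpos i) hS
  have hh1 : ∀ S : Finset V, S.Nonempty → S ≠ univ →
      h * min (∑ i ∈ S, d i) (∑ j ∈ Sᶜ, d j) ≤ ∑ i ∈ S, ∑ j ∈ Sᶜ, w i j := by
    intro S hS hSu
    have hScne : (Sᶜ : Finset V).Nonempty := by
      rw [← Finset.card_pos, Finset.card_compl]
      have := Finset.card_lt_card (lt_of_le_of_ne (Finset.subset_univ S) hSu)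
      rw [Finset.card_univ] at this
      omega
    have hminpos : 0 < min (∑ i ∈ S, d i) (∑ j ∈ Sᶜ, d j) :=
      lt_min (volpos S hS) (volpos _ hScne)
    have hle := hh.2 ⟨S, hS, hSu, rfl⟩
    rw [le_div_iff₀ hminpos] at hle
    linarith
  have hge : 0 ≤ h := by
    obtain ⟨S, hS, hSu, hr⟩ := hh.1
    have hScne : (Sᶜ : Finset V).Nonempty := by
      rw [← Finset.card_pos, Finset.card_compl]
      have := Finset.card_lt_card (lt_of_le_of_ne (Finset.subset_univ S) hSu)
      rw [Finset.card_univ] at this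
      omega
    rw [hr]
    apply div_nonneg
    · exact Finset.sum_nonneg fun i _ => Finset.sum_nonneg fun j _ => hnn i j
    · exact (lt_min (volpos S hS) (volpos _ hScne)).le
  apply hlam.2
  rintro r ⟨f, hf0, hfne, rfl⟩
  have hDf : 0 < ∑ i, (f i)^2 * d i := by
    have hex : ∃ i, f i ≠ 0 := by
      by_contra hcon
      push_neg at hcon
      exact hfne (funext hcon)
    obtain ⟨i1, hi1⟩ := hex
    refine Finset.sum_pos' (fun i _ => mul_nonneg (sq_nonneg _) (hdpos i).le)
      ⟨i1, mem_univ i1, ?_⟩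
    exact mul_pos (pow_two_pos_of_ne_zero hi1) (hdpos i1)
  rw [le_div_iff₀ hDf]
  -- median selection
  obtain ⟨imax, -, himax⟩ := Finset.exists_max_image univ f univ_nonempty
  set T := univ.filter (fun i => Vol / 2 ≤ ∑ j ∈ univ.filter (fun j => f j ≤ f i), d j)
    with hT
  have hTne : T.Nonempty := by
    refine ⟨imax, ?_⟩
    simp only [hT, Finset.mem_filter, mem_univ, true_and]
    have huniv : univ.filter (fun j => f j ≤ f imax) = univ :=
      Finset.eq_univ_iff_forall.mpr fun j => by simp [himax j (mem_univ j)]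
    rw [huniv]
    linarith
  obtain ⟨i0, hi0T, hi0min⟩ := T.exists_min_image f hTne
  set c := f i0 with hc
  have hmedhi : ∑ i ∈ univ.filter (fun i => c < f i), d i ≤ Vol / 2 := by
    have hsplit := Finset.sum_filter_add_sum_filter_not univ (fun i => f i ≤ c) d
    have h1 : Vol/2 ≤ ∑ j ∈ univ.filter (fun j => f j ≤ c), d j := by
      simpa [hT] using (Finset.mem_filter.mp hi0T).2
    have heq : univ.filter (fun i => c < f i) = univ.filter (fun i => ¬ f i ≤ c) := by
      simp [not_le]
    rw [heq]
    linarith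
  have hmedlo : ∑ i ∈ univ.filter (fun i => f i < c), d i ≤ Vol / 2 := by
    rcases (univ.filter (fun i => f i < c)).eq_empty_or_nonempty with he | hne
    · rw [he, Finset.sum_empty]; linarith
    · obtain ⟨i1, hi1mem, hi1max⟩ := Finset.exists_max_image _ f hne
      have hfi1 : f i1 < c := by simpa using hi1mem
      have hi1T : i1 ∉ T := fun hmem => absurd (hi0min i1 hmem) (not_le.mpr hfi1)
      have hlt : ¬ (Vol / 2 ≤ ∑ j ∈ univ.filter (fun j => f j ≤ f i1), d j) := by
        simpa [hT] using hi1T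
      push_neg at hlt
      have hsub : univ.filter (fun i => f i < c) ⊆ univ.filter (fun j => f j ≤ f i1) := by
        intro i hi
        simp only [Finset.mem_filter, mem_univ, true_and] at hi ⊢
        exact hi1max i (by simp [hi])
      calc ∑ i ∈ univ.filter (fun i => f i < c), d i
          ≤ ∑ j ∈ univ.filter (fun j => f j ≤ f i1), d j :=
            Finset.sum_le_sum_of_subset_of_nonneg hsub fun i _ _ => (hdpos i).le
        _ ≤ Vol/2 := hlt.le
  -- decomposition
  set g := fun i => f i - c with hg
  set gp := fun i => max (g i) 0 with hgp
  set gm := fun i => max (-(g i)) 0 with hgm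
  have hgp_nn : ∀ i, 0 ≤ gp i := fun i => le_max_right _ _
  have hgm_nn : ∀ i, 0 ≤ gm i := fun i => le_max_right _ _
  have maxne : ∀ a : ℝ, (max a 0 ≠ 0 ↔ 0 < a) := by
    intro a
    rcases le_or_gt a 0 with ha | ha
    · simp [max_eq_right ha, not_lt.mpr ha]
    · simp [max_eq_left ha.le, ne_of_gt ha, ha]
  have hsuppp : univ.filter (fun i => gp i ≠ 0) = univ.filter (fun i => c < f i) := by
    ext i
    simp only [Finset.mem_filter, mem_univ, true_and, hgp, hg]
    rw [maxne]
    constructor <;> intro <;> linarith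
  have hsuppm : univ.filter (fun i => gm i ≠ 0) = univ.filter (fun i => f i < c) := by
    ext i
    simp only [Finset.mem_filter, mem_univ, true_and, hgm, hg]
    rw [maxne]
    constructor <;> intro <;> linarith
  have Qp := rayleigh_nonneg w d h hsymm hnn hdeg hdpos hge hh1 gp hgp_nn
    (by rw [hsuppp]; exact hmedhi)
  have Qm := rayleigh_nonneg w d h hsymm hnn hdeg hdpos hge hh1 gm hgm_nn
    (by rw [hsuppm]; exact hmedlo)
  -- pointwise facts
  have hrep : ∀ i, g i = gp i - gm i := by
    intro i
    rcases le_total (g i) 0 with hi | hi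
    · rw [hgp, hgm]
      simp only [max_eq_right hi, max_eq_left (neg_nonneg.mpr hi)]
      ring
    · rw [hgp, hgm]
      simp only [max_eq_left hi, max_eq_right (neg_nonpos.mpr hi)]
      ring
  have hprod : ∀ i, gp i * gm i = 0 := by
    intro i
    rcases le_total (g i) 0 with hi | hi
    · rw [hgp]; simp [max_eq_right hi]
    · rw [hgm]; simp [max_eq_right (neg_nonpos.mpr hi)]
  have hg2 : ∀ i, (g i)^2 = (gp i)^2 + (gm i)^2 := by
    intro i
    rw [hrep i]
    linear_combination (-2 : ℝ) * hprod i
  have hdiff : ∀ i j, (gp i - gp j)^2 + (gm i - gm j)^2 ≤ (g i - g j)^2 := by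
    intro i j
    rw [hrep i, hrep j]
    nlinarith [hprod i, hprod j, mul_nonneg (hgp_nn i) (hgm_nn j),
      mul_nonneg (hgp_nn j) (hgm_nn i)]
  -- denominators
  have Dsum : ∑ i, (g i)^2 * d i = ∑ i, (gp i)^2 * d i + ∑ i, (gm i)^2 * d i := by
    rw [← Finset.sum_add_distrib]
    exact Finset.sum_congr rfl fun i _ => by rw [hg2 i]; ring
  have Dshift : ∑ i, (g i)^2 * d i = ∑ i, (f i)^2 * d i + c^2 * Vol := by
    have e : ∀ i, (g i)^2 * d i = (f i)^2 * d i - 2*c*(f i * d i) + c^2 * d i := by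
      intro i; rw [hg]; ring
    calc ∑ i, (g i)^2 * d i
        = ∑ i, ((f i)^2 * d i - 2*c*(f i * d i) + c^2 * d i) :=
          Finset.sum_congr rfl fun i _ => e i
      _ = ∑ i, (f i)^2 * d i - 2*c*(∑ i, f i * d i) + c^2 * Vol := by
          rw [Finset.sum_add_distrib, Finset.sum_sub_distrib, ← Finset.mul_sum,
            ← Finset.mul_sum]
      _ = ∑ i, (f i)^2 * d i + c^2 * Vol := by rw [hf0]; ring
  -- numerators
  have Eeq : ∑ i, ∑ j, w i j * (f i - f j)^2 = ∑ i, ∑ j, w i j * (g i - g j)^2 :=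
    Finset.sum_congr rfl fun i _ => Finset.sum_congr rfl fun j _ => by
      rw [hg]; ring_nf
  have Esplit : ∑ i, ∑ j, w i j * (gp i - gp j)^2 + ∑ i, ∑ j, w i j * (gm i - gm j)^2 ≤
      ∑ i, ∑ j, w i j * (g i - g j)^2 := by
    rw [← Finset.sum_add_distrib]
    refine Finset.sum_le_sum fun i _ => ?_
    rw [← Finset.sum_add_distrib]
    refine Finset.sum_le_sum fun j _ => ?_
    rw [← mul_add]
    exact mul_le_mul_of_nonneg_left (hdiff i j) (hnn i j)
  -- combine
  have hsq : 0 ≤ h^2/2 := by positivity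
  calc h^2/2 * ∑ i, (f i)^2 * d i
      ≤ h^2/2 * ∑ i, (g i)^2 * d i := by
        apply mul_le_mul_of_nonneg_left _ hsq
        rw [Dshift]
        nlinarith [sq_nonneg c, hVolpos]
    _ = h^2/2 * ∑ i, (gp i)^2 * d i + h^2/2 * ∑ i, (gm i)^2 * d i := by
        rw [Dsum]; ring
    _ ≤ (1/2) * ∑ i, ∑ j, w i j * (gp i - gp j)^2 +
          (1/2) * ∑ i, ∑ j, w i j * (gm i - gm j)^2 := add_le_add Qp Qm
    _ ≤ (1/2) * ∑ i, ∑ j, w i j * (g i - g j)^2 := by linarith [Esplit]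
    _ = (1/2) * ∑ i, ∑ j, w i j * (f i - f j)^2 := by rw [Eeq]
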